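/- Consider n cars and n spots where each car, upon finding its preferred spot a_i occupied, first checks spot a_i − 1 (if a_i > 1) and parks there if empty, and otherwise continues forward from a_i to the first empty spot. Then every classical parking function is also a parking function in this backward-one-step model (the set of classical parking functions is contained in the set of backward-one-step parking functions). -/

import Mathlib

/-- The first unoccupied spot with index `≥ p` among spots `1,…,n`. -/
def firstFree (n : ℕ) (occ : Finset ℕ) (p : ℕ) : Option ℕ :=
  let s := (Finset.Icc p n).filter (fun x => x ∉ occ)
  if h : s.Nonempty then some (s.min' h) else none

/-- The classical parking process: cars park in order, each taking the first
unoccupied spot `≥` its preference; returns the list of spots taken in order,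
or `none` if some car cannot park. -/
def parkOutcome (n : ℕ) : List ℕ → Finset ℕ → Option (List ℕ)
  | [], _ => some []
  | p :: ps, occ =>
    match firstFree n occ p with
    | none => none
    | some s => (parkOutcome n ps (insert s occ)).map (s :: ·)

/-- A preference list is a parking function iff every car parks. -/
def IsParkingList (n : ℕ) (l : List ℕ) : Prop := (parkOutcome n l ∅).isSome

/-- Naples (backward-one-step) rule: car tries spot `p`; if occupied it checks
spot `p - 1` (when `p ≥ 2`) and otherwise goes forward from `p + 1`. -/
def naplesStep (n : ℕ) (occ : Finset ℕ) (p : ℕ) : Option ℕ :=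
  if p ≤ n ∧ p ∉ occ then some p
  else if 2 ≤ p ∧ p - 1 ∉ occ then some (p - 1)
  else firstFree n occ (p + 1)

/-- The Naples parking process. -/
def naplesOutcome (n : ℕ) : List ℕ → Finset ℕ → Option (List ℕ)
  | [], _ => some []
  | p :: ps, occ =>
    match naplesStep n occ p with
    | none => none
    | some s => (naplesOutcome n ps (insert s occ)).map (s :: ·)

def freeSet (n : ℕ) (occ : Finset ℕ) (t : ℕ) : Finset ℕ :=
  (Finset.Icc t n).filter (fun x => x ∉ occ)

lemma mem_freeSet {n : ℕ} {occ : Finset ℕ} {t x : ℕ} :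
    x ∈ freeSet n occ t ↔ t ≤ x ∧ x ≤ n ∧ x ∉ occ := by
  simp [freeSet, and_assoc]

lemma freeSet_insert (n : ℕ) (occ : Finset ℕ) (t s : ℕ) :
    freeSet n (insert s occ) t = (freeSet n occ t).erase s := by
  ext x
  simp only [mem_freeSet, Finset.mem_erase, Finset.mem_insert, not_or]
  tauto

lemma freeSet_mono (n : ℕ) (occ : Finset ℕ) {t t' : ℕ} (h : t ≤ t') :
    freeSet n occ t' ⊆ freeSet n occ t := by
  intro x hx
  rw [mem_freeSet] at *
  exact ⟨le_trans h hx.1, hx.2⟩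

/-- Invariant preservation when the Naples car parks at `s ≤ c`. -/
lemma pres1 {n : ℕ} {occC occN : Finset ℕ} {c s : ℕ}
    (inv : ∀ t, (freeSet n occC t).card ≤ (freeSet n occN t).card)
    (hsc : s ≤ c) (hsn : s ≤ n) (hso : s ∉ occN)
    (hcn : c ≤ n) (hco : c ∉ occC) :
    ∀ t, (freeSet n (insert c occC) t).card ≤ (freeSet n (insert s occN) t).card := by
  intro t
  rw [freeSet_insert, freeSet_insert]
  by_cases ht : t ≤ s
  · have hsmem : s ∈ freeSet n occN t := mem_freeSet.mpr ⟨ht, hsn, hso⟩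
    have hcmem : c ∈ freeSet n occC t := mem_freeSet.mpr ⟨le_trans ht hsc, hcn, hco⟩
    rw [Finset.card_erase_of_mem hsmem, Finset.card_erase_of_mem hcmem]
    exact Nat.sub_le_sub_right (inv t) 1
  · have : s ∉ freeSet n occN t := fun hmem => ht (mem_freeSet.mp hmem).1
    rw [Finset.erase_eq_of_notMem this]
    exact le_trans (Finset.card_erase_le) (inv t)

theorem classical_subset_naples_aux (n : ℕ) :
    ∀ (l : List ℕ) (occC occN : Finset ℕ),
    (∀ p ∈ l, 1 ≤ p) →
    (∀ t, (freeSet n occC t).card ≤ (freeSet n occN t).card) →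
    (parkOutcome n l occC).isSome → (naplesOutcome n l occN).isSome := by
  intro l
  induction l with
  | nil => intro _ _ _ _ _; simp [naplesOutcome]
  | cons p ps ih =>
    intro occC occN hpos inv hpark
    have hp1 : 1 ≤ p := hpos p (by simp)
    -- extract the classical parking spot c
    simp only [parkOutcome] at hpark
    rcases hf : firstFree n occC p with _ | c
    · rw [hf] at hpark; simp at hpark
    rw [hf] at hpark
    simp only [Option.isSome_map] at hpark
    -- properties of c
    have hcset : c ∈ (Finset.Icc p n).filter (fun x => x ∉ occC) ∧
        ∀ x ∈ (Finset.Icc p n).filter (fun x => x ∉ occC), c ≤ x := by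
      by_cases hne : ((Finset.Icc p n).filter (fun x => x ∉ occC)).Nonempty
      · simp only [firstFree, dif_pos hne, Option.some.injEq] at hf
        subst hf
        exact ⟨Finset.min'_mem _ hne, fun x hx => Finset.min'_le _ x hx⟩
      · simp [firstFree, dif_neg hne] at hf
    obtain ⟨hcmem, hcmin⟩ := hcset
    simp only [Finset.mem_filter, Finset.mem_Icc] at hcmem
    obtain ⟨⟨hpc, hcn⟩, hco⟩ := hcmem
    -- find the Naples parking spot s
    obtain ⟨s, hs, inv'⟩ : ∃ s, naplesStep n occN p = some s ∧
        ∀ t, (freeSet n (insert c occC) t).card ≤ (freeSet n (insert s occN) t).card := by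
      by_cases h1 : p ≤ n ∧ p ∉ occN
      · exact ⟨p, by simp [naplesStep, h1],
          pres1 inv hpc h1.1 h1.2 hcn hco⟩
      by_cases h2 : 2 ≤ p ∧ p - 1 ∉ occN
      · exact ⟨p - 1, by simp [naplesStep, h1, h2],
          pres1 inv (by omega) (by omega) h2.2 hcn hco⟩
      -- forward case
      have hpn : p ≤ n := le_trans hpc hcn
      have hpocc : p ∈ occN := by
        by_contra hc; exact h1 ⟨hpn, hc⟩
      set q : ℕ := if 2 ≤ p then p - 1 else 1 with hq
      have hqp : q ≤ p := by rw [hq]; split <;> omega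
      have claimA : ∀ x, x ∈ freeSet n occN q → p + 1 ≤ x := by
        intro x hx
        rw [mem_freeSet] at hx
        have hxp : x ≠ p := fun h => hx.2.2 (h ▸ hpocc)
        by_cases h2p : 2 ≤ p
        · have : p - 1 ∈ occN := by
            by_contra hc; exact h2 ⟨h2p, hc⟩
          have hxp1 : x ≠ p - 1 := fun h => hx.2.2 (h ▸ this)
          have : q = p - 1 := by rw [hq]; simp [h2p]
          omega
        · have : q = 1 := by rw [hq]; simp [h2p]
          omega
      have hNeq : freeSet n occN q = freeSet n occN (p + 1) := by
        apply Finset.Subset.antisymm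
        · intro x hx
          rw [mem_freeSet] at *
          exact ⟨claimA x (mem_freeSet.mpr hx), hx.2⟩
        · exact freeSet_mono n occN (by omega)
      have hcq : c ∈ freeSet n occC q := mem_freeSet.mpr ⟨le_trans hqp hpc, hcn, hco⟩
      have hNne : (freeSet n occN (p + 1)).Nonempty := by
        rw [← hNeq]
        have h1le : 1 ≤ (freeSet n occC q).card := Finset.card_pos.mpr ⟨c, hcq⟩
        have := inv q
        exact Finset.card_pos.mp (by omega)
      have hffN : firstFree n occN (p + 1) =
          some ((freeSet n occN (p + 1)).min' hNne) := by
        unfold firstFree freeSet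
        rw [dif_pos]
        exact hNne
      set s := (freeSet n occN (p + 1)).min' hNne with hsdef
      have hsmem : s ∈ freeSet n occN (p + 1) := Finset.min'_mem _ _
      have hsprop := mem_freeSet.mp hsmem
      have hsmin : ∀ x ∈ freeSet n occN (p + 1), s ≤ x :=
        fun x hx => Finset.min'_le _ x hx
      refine ⟨s, by simp [naplesStep, h1, h2, hffN], ?_⟩
      intro t
      rw [freeSet_insert, freeSet_insert]
      by_cases hts : t ≤ s
      · have hsmemt : s ∈ freeSet n occN t :=
          mem_freeSet.mpr ⟨hts, hsprop.2.1, hsprop.2.2⟩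
        rw [Finset.card_erase_of_mem hsmemt]
        by_cases htc : t ≤ c
        · have hcmemt : c ∈ freeSet n occC t := mem_freeSet.mpr ⟨htc, hcn, hco⟩
          rw [Finset.card_erase_of_mem hcmemt]
          exact Nat.sub_le_sub_right (inv t) 1
        · -- bad case: c < t ≤ s; show strict inequality via threshold q
          push_neg at htc
          have hcnot : c ∉ freeSet n occC t := fun h => by
            have := (mem_freeSet.mp h).1; omega
          rw [Finset.erase_eq_of_notMem hcnot]
          -- freeSet n occN t = freeSet n occN q
          have hNtq : freeSet n occN q = freeSet n occN t := by
            apply Finset.Subset.antisymm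
            · intro x hx
              have hpx : p + 1 ≤ x := claimA x hx
              have hxf : x ∈ freeSet n occN (p + 1) := hNeq ▸ hx
              have := hsmin x hxf
              rw [mem_freeSet] at *
              exact ⟨by omega, hx.2⟩
            · exact freeSet_mono n occN (by omega)
          have hsub : insert c (freeSet n occC t) ⊆ freeSet n occC q := by
            intro x hx
            rcases Finset.mem_insert.mp hx with rfl | hx
            · exact hcq
            · exact freeSet_mono n occC (by omega) hx
          have hcard : (freeSet n occC t).card + 1 ≤ (freeSet n occC q).card := by
            have := Finset.card_le_card hsub
            rwa [Finset.card_insert_of_notMem hcnot] at this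
          have := inv q
          rw [hNtq] at this
          omega
      · have : s ∉ freeSet n occN t := fun hmem => hts (mem_freeSet.mp hmem).1
        rw [Finset.erase_eq_of_notMem this]
        exact le_trans (Finset.card_erase_le) (inv t)
    -- conclude
    simp only [naplesOutcome, hs, Option.isSome_map]
    exact ih (insert c occC) (insert s occN)
      (fun x hx => hpos x (by simp [hx])) inv' hpark

/-- Every classical parking function is a Naples (backward-one-step) parking function. -/
theorem classical_subset_naples (n : ℕ) (a : Fin n → ℕ)
    (ha : ∀ i, a i ∈ Finset.Icc 1 n)
    (h : (parkOutcome n (List.ofFn a) ∅).isSome) :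
    (naplesOutcome n (List.ofFn a) ∅).isSome := by
  apply classical_subset_naples_aux n (List.ofFn a) ∅ ∅
  · intro p hp
    obtain ⟨i, rfl⟩ := List.mem_ofFn.mp hp
    exact (Finset.mem_Icc.mp (ha i)).1
  · intro t; exact le_refl _
  · exact h
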